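/- Let a0, c, mu0, mu1 > 0, b ∈ ℝ, and σ > a0/(2c). Set E = 3·a0²·mu1² − 2·a0·b·mu1 − 4·a0·mu0 − b² + 4·a0 and assume E·(a0 − c·σ) > 0. Define B = (a0·mu1 − b)/(2·a0), ω = −(a0·mu1² − b·mu1 − mu0 + σ)·mu1, λ = √(E/(16·a0·(a0 − c·σ))), d2 = 3·√(2·c·σ − a0)·E/(8·√a0·(a0 − c·σ)), h2 = 3·E/(8·(a0 − c·σ)), and h0 = (6·a0²·c·mu1²·σ − 4·a0·b·c·mu1·σ − 8·a0·c·mu0·σ + 8·a0·c·σ² − 2·b²·c·σ − 8·a0²·σ + 8·a0²)/(8·a0·(c·σ − a0)). Then f(ξ) = d2·sech²(λ·ξ) and g(ξ) = h0 + h2·sech²(λ·ξ) satisfy the Schrödinger KdV–BBM associated ODE system with parameters a0, c, mu0, mu1, b, wave speed σ, and phase shifts B, ω. -/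

import Mathlib

private lemma aux_cosh (lam t : ℝ) :
    HasDerivAt (fun y => Real.cosh (lam*y)) (Real.sinh (lam*t) * lam) t := by
  have hlin : HasDerivAt (fun y : ℝ => lam * y) lam t := by
    simpa using (hasDerivAt_id t).const_mul lam
  exact (Real.hasDerivAt_cosh (lam*t)).comp t hlin

private lemma aux_sinh (lam t : ℝ) :
    HasDerivAt (fun y => Real.sinh (lam*y)) (Real.cosh (lam*t) * lam) t := by
  have hlin : HasDerivAt (fun y : ℝ => lam * y) lam t := by
    simpa using (hasDerivAt_id t).const_mul lam
  exact (Real.hasDerivAt_sinh (lam*t)).comp t hlin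

private lemma aux1 (k lam t : ℝ) :
    HasDerivAt (fun y => k * (1/Real.cosh (lam*y))^2)
      (-2*k*lam*(Real.sinh (lam*t)/Real.cosh (lam*t)^3)) t := by
  have hc : Real.cosh (lam*t) ≠ 0 := (Real.cosh_pos _).ne'
  have h1 := (((aux_cosh lam t).inv hc).pow 2).const_mul k
  simp only [← one_div] at h1
  refine h1.congr_deriv ?_
  simp only [Pi.div_apply, Pi.pow_apply, Pi.one_apply, Pi.sub_apply, Nat.cast_ofNat, Nat.reduceSub, pow_one]
  field_simp

private lemma aux2 (k lam t : ℝ) :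
    HasDerivAt (fun y => -2*k*lam*(Real.sinh (lam*y)/Real.cosh (lam*y)^3))
      (-2*k*lam^2*((Real.cosh (lam*t)^2 - 3*Real.sinh (lam*t)^2)/Real.cosh (lam*t)^4)) t := by
  have hc : Real.cosh (lam*t) ≠ 0 := (Real.cosh_pos _).ne'
  have h1 := (((aux_sinh lam t).div ((aux_cosh lam t).pow 3)
      (pow_ne_zero 3 hc)).const_mul (-2*k*lam))
  refine h1.congr_deriv ?_
  simp only [Pi.div_apply, Pi.pow_apply, Pi.one_apply, Pi.sub_apply, Nat.cast_ofNat]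
  field_simp
  ring

private lemma aux3 (k lam t : ℝ) :
    HasDerivAt (fun y => -2*k*lam^2*((Real.cosh (lam*y)^2 - 3*Real.sinh (lam*y)^2)/Real.cosh (lam*y)^4))
      (-2*k*lam^3*((-8*Real.sinh (lam*t)*Real.cosh (lam*t)^2 + 12*Real.sinh (lam*t)^3)/Real.cosh (lam*t)^5)) t := by
  have hc : Real.cosh (lam*t) ≠ 0 := (Real.cosh_pos _).ne'
  have hnum := ((aux_cosh lam t).pow 2).sub (((aux_sinh lam t).pow 2).const_mul 3)
  have h1 := ((hnum.div ((aux_cosh lam t).pow 4) (pow_ne_zero 4 hc)).const_mul (-2*k*lam^2))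
  refine h1.congr_deriv ?_
  simp only [Pi.div_apply, Pi.pow_apply, Pi.one_apply, Pi.sub_apply, Nat.cast_ofNat]
  field_simp
  ring

set_option maxHeartbeats 2000000 in
theorem stmt_8
    (a0 c mu0 mu1 b : ℝ)
    (ha0 : 0 < a0) (hc : 0 < c) (hmu0 : 0 < mu0) (hmu1 : 0 < mu1)
    (σ : ℝ) (hσ : σ > a0/(2*c))
    (E : ℝ) (hE : E = 3*a0^2*mu1^2 - 2*a0*b*mu1 - 4*a0*mu0 - b^2 + 4*a0) (hEsgn : E * (a0 - c*σ) > 0)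
    (B ω lam d2 h2 h0 : ℝ)
    (h_B : B = (a0*mu1 - b)/(2*a0))
    (h_ω : ω = -(a0*mu1^2 - b*mu1 - mu0 + σ)*mu1)
    (h_lam : lam = Real.sqrt (E/(16*a0*(a0 - c*σ))))
    (h_d2 : d2 = 3*Real.sqrt (2*c*σ - a0)*E/(8*Real.sqrt a0*(a0 - c*σ)))
    (h_h2 : h2 = 3*E/(8*(a0 - c*σ)))
    (h_h0 : h0 = (6*a0^2*c*mu1^2*σ - 4*a0*b*c*mu1*σ - 8*a0*c*mu0*σ + 8*a0*c*σ^2 - 2*b^2*c*σ - 8*a0^2*σ + 8*a0^2)/(8*a0*(c*σ - a0)))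
    (f g : ℝ → ℝ)
    (hfdef : ∀ ξ : ℝ, f ξ = d2 * (1/Real.cosh (lam*ξ))^2)
    (hgdef : ∀ ξ : ℝ, g ξ = h0 + h2 * (1/Real.cosh (lam*ξ))^2) :
    ∀ ξ : ℝ,
      (deriv f ξ * g ξ + f ξ * deriv g ξ + a0 * iteratedDeriv 3 f ξ + (mu0 - σ - 3*a0*B^2 - 2*b*B) * deriv f ξ = 0) ∧
      ((B + mu1) * f ξ * g ξ + (3*a0*B + b) * iteratedDeriv 2 f ξ + (ω + B*mu0 - B*σ - a0*B^3 - b*B^2) * f ξ = 0) ∧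
      (f ξ * deriv f ξ + g ξ * deriv g ξ + (c*σ) * iteratedDeriv 3 g ξ + (1 - σ) * deriv g ξ = 0) := by
  have ha0' : a0 ≠ 0 := ne_of_gt ha0
  have hacs : a0 - c*σ ≠ 0 := by
    intro h; rw [h, mul_zero] at hEsgn; exact lt_irrefl 0 hEsgn
  have hcsa : c*σ - a0 ≠ 0 := fun h => hacs (by linarith)
  have h2cs : (0:ℝ) < 2*c*σ - a0 := by
    have h2c : (0:ℝ) < 2*c := by linarith
    have := (div_lt_iff₀ h2c).mp hσ
    nlinarith
  have hl2 : lam^2 = E/(16*a0*(a0 - c*σ)) := by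
    rw [h_lam, Real.sq_sqrt]
    rw [show E/(16*a0*(a0 - c*σ)) = (E*(a0 - c*σ))/(16*a0*(a0 - c*σ)^2) by field_simp]
    apply div_nonneg (le_of_lt hEsgn)
    positivity
  have hlam3 : lam^3 = lam*(E/(16*a0*(a0 - c*σ))) := by rw [← hl2]; ring
  have hd2sq : d2^2 = 9*(2*c*σ - a0)*E^2/(64*a0*(a0 - c*σ)^2) := by
    have h1 : Real.sqrt (2*c*σ - a0)^2 = 2*c*σ - a0 := Real.sq_sqrt h2cs.le
    have h2' : Real.sqrt a0^2 = a0 := Real.sq_sqrt ha0.le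
    rw [h_d2]
    simp only [div_pow, mul_pow]
    rw [h1, h2']
    norm_num
  -- derivatives of f
  have hfe : f = fun y => d2 * (1/Real.cosh (lam*y))^2 := funext hfdef
  have hdf : deriv f = fun t => -2*d2*lam*(Real.sinh (lam*t)/Real.cosh (lam*t)^3) :=
    funext fun t => by rw [hfe]; exact (aux1 d2 lam t).deriv
  have hdf2 : deriv (deriv f)
      = fun t => -2*d2*lam^2*((Real.cosh (lam*t)^2 - 3*Real.sinh (lam*t)^2)/Real.cosh (lam*t)^4) :=
    funext fun t => by rw [hdf]; exact (aux2 d2 lam t).deriv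
  have hdf3 : deriv (deriv (deriv f))
      = fun t => -2*d2*lam^3*((-8*Real.sinh (lam*t)*Real.cosh (lam*t)^2 + 12*Real.sinh (lam*t)^3)/Real.cosh (lam*t)^5) :=
    funext fun t => by rw [hdf2]; exact (aux3 d2 lam t).deriv
  -- derivatives of g
  have hge : g = fun y => h0 + h2 * (1/Real.cosh (lam*y))^2 := funext hgdef
  have hg1 : ∀ t, HasDerivAt g (-2*h2*lam*(Real.sinh (lam*t)/Real.cosh (lam*t)^3)) t := by
    intro t
    rw [hge]
    simpa using (aux1 h2 lam t)
  have hdg : deriv g = fun t => -2*h2*lam*(Real.sinh (lam*t)/Real.cosh (lam*t)^3) :=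
    funext fun t => (hg1 t).deriv
  have hdg2 : deriv (deriv g)
      = fun t => -2*h2*lam^2*((Real.cosh (lam*t)^2 - 3*Real.sinh (lam*t)^2)/Real.cosh (lam*t)^4) :=
    funext fun t => by rw [hdg]; exact (aux2 h2 lam t).deriv
  have hdg3 : deriv (deriv (deriv g))
      = fun t => -2*h2*lam^3*((-8*Real.sinh (lam*t)*Real.cosh (lam*t)^2 + 12*Real.sinh (lam*t)^3)/Real.cosh (lam*t)^5) :=
    funext fun t => by rw [hdg2]; exact (aux3 h2 lam t).deriv
  have hIt2f : iteratedDeriv 2 f = deriv (deriv f) := by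
    rw [iteratedDeriv_succ, iteratedDeriv_one]
  have hIt3f : iteratedDeriv 3 f = deriv (deriv (deriv f)) := by
    rw [iteratedDeriv_succ, iteratedDeriv_succ, iteratedDeriv_one]
  have hIt3g : iteratedDeriv 3 g = deriv (deriv (deriv g)) := by
    rw [iteratedDeriv_succ, iteratedDeriv_succ, iteratedDeriv_one]
  intro ξ
  have hCne : Real.cosh (lam*ξ) ≠ 0 := (Real.cosh_pos _).ne'
  have hS2 : Real.sinh (lam*ξ)^2 = Real.cosh (lam*ξ)^2 - 1 := by
    have := Real.cosh_sq_sub_sinh_sq (lam*ξ); linarith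
  have hs3 : Real.sinh (lam*ξ)^3 = Real.sinh (lam*ξ)*(Real.cosh (lam*ξ)^2 - 1) := by
    rw [pow_succ, hS2]; ring
  have hF0 : f ξ = d2 * (1/Real.cosh (lam*ξ))^2 := hfdef ξ
  have hG0 : g ξ = h0 + h2 * (1/Real.cosh (lam*ξ))^2 := hgdef ξ
  have hF1 : deriv f ξ = -2*d2*lam*(Real.sinh (lam*ξ)/Real.cosh (lam*ξ)^3) := by rw [hdf]
  have hG1 : deriv g ξ = -2*h2*lam*(Real.sinh (lam*ξ)/Real.cosh (lam*ξ)^3) := by rw [hdg]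
  have hF2 : iteratedDeriv 2 f ξ
      = -2*d2*lam^2*((Real.cosh (lam*ξ)^2 - 3*Real.sinh (lam*ξ)^2)/Real.cosh (lam*ξ)^4) := by
    rw [hIt2f, hdf2]
  have hF3 : iteratedDeriv 3 f ξ
      = -2*d2*lam^3*((-8*Real.sinh (lam*ξ)*Real.cosh (lam*ξ)^2 + 12*Real.sinh (lam*ξ)^3)/Real.cosh (lam*ξ)^5) := by
    rw [hIt3f, hdf3]
  have hG3 : iteratedDeriv 3 g ξ
      = -2*h2*lam^3*((-8*Real.sinh (lam*ξ)*Real.cosh (lam*ξ)^2 + 12*Real.sinh (lam*ξ)^3)/Real.cosh (lam*ξ)^5) := by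
    rw [hIt3g, hdg3]
  refine ⟨?_, ?_, ?_⟩
  · rw [hF1, hG0, hF0, hG1, hF3, hs3, hlam3, h_B, h_h0, h_h2, hE]
    field_simp
    ring
  · rw [hF0, hG0, hF2, hS2, hl2, h_B, h_ω, h_h0, h_h2, hE]
    field_simp
    ring
  · have hFF : f ξ * deriv f ξ
        = (9*(2*c*σ - a0)*E^2/(64*a0*(a0 - c*σ)^2)) * (-2*lam*(Real.sinh (lam*ξ)/Real.cosh (lam*ξ)^5)) := by
      rw [hF0, hF1]
      rw [show d2 * (1/Real.cosh (lam*ξ))^2 * (-2*d2*lam*(Real.sinh (lam*ξ)/Real.cosh (lam*ξ)^3))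
          = d2^2 * (-2*lam*(Real.sinh (lam*ξ)/Real.cosh (lam*ξ)^5)) from by field_simp, hd2sq]
    rw [hFF, hG0, hG1, hG3, hs3, hlam3, h_h0, h_h2, hE]
    field_simp
    ring
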